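/- Let (G_n) be a sequence of finite connected vertex-transitive graphs with |V(G_n)| → ∞. If (G_n) has a percolation threshold, then (G_n) has the supercritical existence property: for every supercritical sequence of parameters (q_n), there exists α > 0 such that lim_{n→∞} ℙ^{G_n}_{q_n}( ∥K_1∥ ≥ α ) = 1. -/

import Mathlib

open Filter Topology

noncomputable section

/-- The subgraph of `G` whose open edges are given by the configuration `ω`. -/
def SimpleGraph.openGraph {V : Type} (G : SimpleGraph V) (ω : G.edgeSet → Bool) :
    SimpleGraph V where
  Adj u v := u ≠ v ∧ ∃ e : G.edgeSet, ω e = true ∧ u ∈ (e : Sym2 V) ∧ v ∈ (e : Sym2 V)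
  symm := ⟨fun _ _ ⟨hne, e, hw, hu, hv⟩ => ⟨hne.symm, e, hw, hv, hu⟩⟩
  loopless := ⟨fun _ ⟨hne, _⟩ => hne rfl⟩

/-- The density `∥K_v∥` of the cluster of the vertex `v` in the configuration `ω`. -/
def clusterDensity {V : Type} [Fintype V] (G : SimpleGraph V) (ω : G.edgeSet → Bool)
    (v : V) : ℝ :=
  (((G.openGraph ω).connectedComponentMk v).supp.ncard : ℝ) / (Fintype.card V : ℝ)

/-- The density `∥K_1∥` of the largest cluster in the configuration `ω`. -/
def maxClusterDensity {V : Type} [Fintype V] (G : SimpleGraph V) (ω : G.edgeSet → Bool) : ℝ :=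
  ⨆ v : V, clusterDensity G ω v

/-- The density `∥K_2∥` of the second largest cluster (zero if there is only one cluster). -/
def secondClusterDensity {V : Type} [Fintype V] (G : SimpleGraph V)
    (ω : G.edgeSet → Bool) : ℝ :=
  ⨆ u : V, ⨆ v : V, ⨆ _ : ¬ (G.openGraph ω).Reachable u v,
    min (clusterDensity G ω u) (clusterDensity G ω v)

/-- Clamp a parameter into `[0,1]` (the convention `ℙ_p := ℙ_1` for `p > 1`, `ℙ_p := ℙ_0` for
`p < 0`). -/
def pclamp (p : ℝ) : ℝ := max 0 (min 1 p)

/-- The probability of the configuration `ω` under Bernoulli bond percolation. -/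
def configWeight {V : Type} [Fintype V] [DecidableEq V] (G : SimpleGraph V)
    [DecidableRel G.Adj] (p : ℝ) (ω : G.edgeSet → Bool) : ℝ :=
  ∏ e : G.edgeSet, if ω e then pclamp p else 1 - pclamp p

/-- The probability `ℙ_p^G(A)` of an event `A` under Bernoulli bond percolation. -/
def percProb {V : Type} [Fintype V] [DecidableEq V] (G : SimpleGraph V) [DecidableRel G.Adj]
    (p : ℝ) (A : Set (G.edgeSet → Bool)) : ℝ :=
  ∑ ω : G.edgeSet → Bool, Set.indicator A (configWeight G p) ω

/-- The expectation `E_p^G[f]` under Bernoulli bond percolation. -/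
def percExp {V : Type} [Fintype V] [DecidableEq V] (G : SimpleGraph V) [DecidableRel G.Adj]
    (p : ℝ) (f : (G.edgeSet → Bool) → ℝ) : ℝ :=
  ∑ ω : G.edgeSet → Bool, configWeight G p ω * f ω

/-- A graph is vertex-transitive if its automorphism group acts transitively on vertices. -/
def VertexTransitive {V : Type} (G : SimpleGraph V) : Prop :=
  ∀ u v : V, ∃ φ : G ≃g G, φ u = v

/-- A finite graph, bundled with its vertex type. -/
structure FinGraph where
  V : Type
  [fintypeV : Fintype V]
  [decEqV : DecidableEq V]
  G : SimpleGraph V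
  [decAdj : DecidableRel G.Adj]

attribute [instance] FinGraph.fintypeV FinGraph.decEqV FinGraph.decAdj

/-- `(p_n)` is a percolation threshold for the sequence of finite graphs `(G_n)`. -/
def IsPercolationThreshold (H : ℕ → FinGraph) (p : ℕ → ℝ) : Prop :=
  ∀ ε : ℝ, 0 < ε →
    (∃ α : ℝ, 0 < α ∧ Tendsto (fun n => percProb (H n).G ((1 + ε) * p n)
        {ω | α ≤ maxClusterDensity (H n).G ω}) atTop (𝓝 1)) ∧
    (∀ α : ℝ, 0 < α → Tendsto (fun n => percProb (H n).G ((1 - ε) * p n)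
        {ω | α ≤ maxClusterDensity (H n).G ω}) atTop (𝓝 0))

/-- A sequence of finite graphs is dense:
`liminf |E(G_n)|/|V(G_n)|² > 0`. -/
def DenseSeq (H : ℕ → FinGraph) : Prop :=
  ∃ c : ℝ, 0 < c ∧ ∀ᶠ n in atTop,
    c ≤ ((H n).G.edgeFinset.card : ℝ) / (Fintype.card (H n).V : ℝ) ^ 2

/-- The sequence `(G_n)` is `m`-molecular. -/
def IsMMolecular (H : ℕ → FinGraph) (m : ℕ) : Prop :=
  DenseSeq H ∧ ∃ C : ℝ, ∀ n : ℕ, ∃ F : Set (Sym2 (H n).V),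
    F ⊆ (H n).G.edgeSet ∧
    Nat.card ((H n).G.deleteEdges F).ConnectedComponent = m ∧
    (∀ φ : (H n).G ≃g (H n).G, Sym2.map ⇑φ '' F = F) ∧
    (F.ncard : ℝ) ≤ C * (Fintype.card (H n).V : ℝ)

/-- The sequence `(G_n)` contains an `m`-molecular subsequence. -/
def HasMMolecularSubseq (H : ℕ → FinGraph) (m : ℕ) : Prop :=
  ∃ f : ℕ → ℕ, StrictMono f ∧ IsMMolecular (H ∘ f) m

end

noncomputable section

/-- A sequence of parameters `(q_n)` is supercritical for `(G_n)`. -/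
def IsSupercritical (H : ℕ → FinGraph) (q : ℕ → ℝ) : Prop :=
  ∃ ε : ℝ, 0 < ε ∧ ∃ N : ℕ, ∀ n, N ≤ n → q n < 1 →
    ε ≤ percProb (H n).G ((1 - ε) * q n) {ω | ε ≤ maxClusterDensity (H n).G ω}

/-- The supercritical uniqueness property. -/
def SupercriticalUniqueness (H : ℕ → FinGraph) : Prop :=
  ∀ q : ℕ → ℝ, IsSupercritical H q → ∀ α : ℝ, 0 < α →
    Tendsto (fun n => percProb (H n).G (q n)
      {ω | α ≤ secondClusterDensity (H n).G ω}) atTop (𝓝 0)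

/-- The supercritical existence property. -/
def SupercriticalExistence (H : ℕ → FinGraph) : Prop :=
  ∀ q : ℕ → ℝ, IsSupercritical H q → ∃ α : ℝ, 0 < α ∧
    Tendsto (fun n => percProb (H n).G (q n)
      {ω | α ≤ maxClusterDensity (H n).G ω}) atTop (𝓝 1)

end

noncomputable section Aux

lemma pclamp_nonneg (p : ℝ) : 0 ≤ pclamp p := le_max_left _ _

lemma pclamp_le_one (p : ℝ) : pclamp p ≤ 1 := max_le zero_le_one (min_le_left _ _)

lemma pclamp_mono : Monotone pclamp := fun _ _ h => max_le_max le_rfl (min_le_min le_rfl h)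

lemma pclamp_eq_zero {p : ℝ} (h : p ≤ 0) : pclamp p = 0 :=
  max_eq_left ((min_le_right _ _).trans h)

lemma le_pclamp {p : ℝ} (h : p ≤ 1) : p ≤ pclamp p := by
  rw [pclamp, min_eq_right h]; exact le_max_right _ _

lemma pclamp_le_self {p : ℝ} (h : 0 < pclamp p) : pclamp p ≤ p := by
  rcases le_or_gt (min 1 p) 0 with h' | h'
  · rw [pclamp, max_eq_left h'] at h; linarith
  · rw [pclamp, max_eq_right h'.le]; exact min_le_right _ _

lemma configWeight_nonneg {V : Type} [Fintype V] [DecidableEq V] (G : SimpleGraph V)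
    [DecidableRel G.Adj] (p : ℝ) (ω : G.edgeSet → Bool) : 0 ≤ configWeight G p ω :=
  Finset.prod_nonneg fun e _ => by
    by_cases h : ω e
    · simp [h, pclamp_nonneg]
    · rw [if_neg h]
      linarith [pclamp_le_one p]

lemma sum_ite_prod {ι : Type} [Fintype ι] [DecidableEq ι] {r : ℝ} :
    ∑ ω : ι → Bool, ∏ i, (if ω i then r else 1 - r) = 1 := by
  rw [← Fintype.prod_sum fun (_ : ι) (b : Bool) => if b then r else 1 - r]
  simp

/-- The key coupling monotonicity lemma for product Bernoulli measures and
increasing events. -/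
lemma sum_ind_prod_mono {ι : Type} [Fintype ι] [DecidableEq ι] {r r' : ℝ}
    (h0 : 0 ≤ r) (hrr : r ≤ r') (h1 : r' ≤ 1) (A : Set (ι → Bool))
    (hA : ∀ ω ω' : ι → Bool, (∀ i, ω i = true → ω' i = true) → ω ∈ A → ω' ∈ A) :
    ∑ ω : ι → Bool, A.indicator (fun ω => ∏ i, if ω i then r else 1 - r) ω
      ≤ ∑ ω : ι → Bool, A.indicator (fun ω => ∏ i, if ω i then r' else 1 - r') ω := by
  classical
  set w2 : Bool → Bool → ℝ := fun a b =>
    if a then (if b then r else 0) else (if b then r' - r else 1 - r') with hw2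
  have hw2nn : ∀ a b, 0 ≤ w2 a b := by
    intro a b; cases a <;> cases b <;> simp [w2] <;> linarith
  set χ : (ι → Bool) → ℝ := fun ω => if ω ∈ A then 1 else 0 with hχ
  have hind : ∀ (f : (ι → Bool) → ℝ) (ω : ι → Bool), A.indicator f ω = χ ω * f ω := by
    intro f ω; by_cases h : ω ∈ A <;> simp [χ, h]
  have hrow : ∀ ω : ι → Bool,
      (∏ i, if ω i then r else 1 - r) = ∑ ω' : ι → Bool, ∏ i, w2 (ω i) (ω' i) := by
    intro ω
    rw [← Fintype.prod_sum fun (i : ι) (b : Bool) => w2 (ω i) b]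
    refine Finset.prod_congr rfl fun i _ => ?_
    cases h : ω i <;> simp [w2] <;> ring
  have hcol : ∀ ω' : ι → Bool,
      (∏ i, if ω' i then r' else 1 - r') = ∑ ω : ι → Bool, ∏ i, w2 (ω i) (ω' i) := by
    intro ω'
    rw [← Fintype.prod_sum fun (i : ι) (a : Bool) => w2 a (ω' i)]
    refine Finset.prod_congr rfl fun i _ => ?_
    cases h : ω' i <;> simp [w2] <;> ring
  calc ∑ ω : ι → Bool, A.indicator (fun ω => ∏ i, if ω i then r else 1 - r) ω
      = ∑ ω : ι → Bool, ∑ ω' : ι → Bool, χ ω * ∏ i, w2 (ω i) (ω' i) := by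
        simp_rw [hind, hrow, Finset.mul_sum]
    _ ≤ ∑ ω : ι → Bool, ∑ ω' : ι → Bool, χ ω' * ∏ i, w2 (ω i) (ω' i) := by
        refine Finset.sum_le_sum fun ω _ => Finset.sum_le_sum fun ω' _ => ?_
        by_cases hle : ∀ i, ω i = true → ω' i = true
        · have hχle : χ ω ≤ χ ω' := by
            by_cases h : ω ∈ A
            · simp [χ, h, hA ω ω' hle h]
            · simp only [hχ, h, if_false]
              split <;> norm_num
          exact mul_le_mul_of_nonneg_right hχle
            (Finset.prod_nonneg fun i _ => hw2nn _ _)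
        · push_neg at hle
          obtain ⟨i, hi, hi'⟩ := hle
          have hz : ∏ i, w2 (ω i) (ω' i) = 0 :=
            Finset.prod_eq_zero (Finset.mem_univ i)
              (by
                have hf : ω' i = false := by simpa using hi'
                simp [w2, hi, hf])
          rw [hz, mul_zero, mul_zero]
    _ = ∑ ω' : ι → Bool, A.indicator (fun ω => ∏ i, if ω i then r' else 1 - r') ω' := by
        rw [Finset.sum_comm]
        simp_rw [hind, hcol, Finset.mul_sum]

lemma percProb_mono_event {V : Type} [Fintype V] [DecidableEq V] (G : SimpleGraph V)
    [DecidableRel G.Adj] (p : ℝ) {A B : Set (G.edgeSet → Bool)} (h : A ⊆ B) :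
    percProb G p A ≤ percProb G p B :=
  Finset.sum_le_sum fun ω _ =>
    Set.indicator_le_indicator_of_subset h (fun _ => configWeight_nonneg G p _) ω

lemma percProb_le_one {V : Type} [Fintype V] [DecidableEq V] (G : SimpleGraph V)
    [DecidableRel G.Adj] (p : ℝ) (A : Set (G.edgeSet → Bool)) :
    percProb G p A ≤ 1 := by
  refine (percProb_mono_event G p (Set.subset_univ A)).trans ?_
  rw [percProb]
  simp only [Set.indicator_univ]
  exact le_of_eq (sum_ite_prod (r := pclamp p))

lemma percProb_mono_p {V : Type} [Fintype V] [DecidableEq V] (G : SimpleGraph V)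
    [DecidableRel G.Adj] {p p' : ℝ} (h : pclamp p ≤ pclamp p')
    (A : Set (G.edgeSet → Bool))
    (hA : ∀ ω ω' : G.edgeSet → Bool, (∀ e, ω e = true → ω' e = true) → ω ∈ A → ω' ∈ A) :
    percProb G p A ≤ percProb G p' A :=
  sum_ind_prod_mono (pclamp_nonneg p) h (pclamp_le_one p') A hA

lemma openGraph_mono {V : Type} (G : SimpleGraph V) {ω ω' : G.edgeSet → Bool}
    (h : ∀ e, ω e = true → ω' e = true) : G.openGraph ω ≤ G.openGraph ω' :=
  fun u v hadj => show u ≠ v ∧ ∃ e : G.edgeSet, ω' e = true ∧ u ∈ (e : Sym2 V) ∧ v ∈ (e : Sym2 V) from ⟨hadj.1, hadj.2.choose, h _ hadj.2.choose_spec.1,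
    hadj.2.choose_spec.2.1, hadj.2.choose_spec.2.2⟩

lemma clusterDensity_mono {V : Type} [Fintype V] (G : SimpleGraph V)
    {ω ω' : G.edgeSet → Bool} (h : ∀ e, ω e = true → ω' e = true) (v : V) :
    clusterDensity G ω v ≤ clusterDensity G ω' v := by
  have hsub : ((G.openGraph ω).connectedComponentMk v).supp ⊆
      ((G.openGraph ω').connectedComponentMk v).supp := by
    intro x hx
    rw [SimpleGraph.ConnectedComponent.mem_supp_iff] at hx ⊢
    rw [SimpleGraph.ConnectedComponent.eq] at hx ⊢
    exact hx.mono (openGraph_mono G h)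
  have hcard := Set.ncard_le_ncard hsub (Set.toFinite _)
  unfold clusterDensity
  gcongr

lemma maxClusterDensity_mono {V : Type} [Fintype V] (G : SimpleGraph V)
    {ω ω' : G.edgeSet → Bool} (h : ∀ e, ω e = true → ω' e = true) :
    maxClusterDensity G ω ≤ maxClusterDensity G ω' := by
  cases isEmpty_or_nonempty V with
  | inl hV => unfold maxClusterDensity; rw [iSup_of_empty', iSup_of_empty']
  | inr hV =>
    exact ciSup_mono (Set.Finite.bddAbove (Set.finite_range _))
      (clusterDensity_mono G h)

end Aux

/-- If a sequence of finite connected vertex-transitive graphs with volume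
tending to infinity has a percolation threshold, then it has the supercritical existence
property. -/
theorem supercritical_existence_of_threshold
    (H : ℕ → FinGraph)
    (hconn : ∀ n, (H n).G.Connected)
    (htrans : ∀ n, VertexTransitive (H n).G)
    (hvol : Tendsto (fun n => Fintype.card (H n).V) atTop atTop)
    (hthr : ∃ p : ℕ → ℝ, IsPercolationThreshold H p) :
    SupercriticalExistence H := by
  obtain ⟨p, hp⟩ := hthr
  intro q hq
  obtain ⟨ε, hε, N, hN⟩ := hq
  set ε₀ : ℝ := min ε (1/2) with hε₀def
  have hε₀ : 0 < ε₀ := lt_min hε (by norm_num)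
  have hε₀le : ε₀ ≤ ε := min_le_left _ _
  have hε₀half : ε₀ ≤ 1/2 := min_le_right _ _
  obtain ⟨⟨α, hα, hsup⟩, hsub⟩ := hp (ε₀/2) (by positivity)
  refine ⟨α, hα, ?_⟩
  have hinc : ∀ (n : ℕ) (β : ℝ) (ω ω' : (H n).G.edgeSet → Bool),
      (∀ e, ω e = true → ω' e = true) →
      ω ∈ {ω | β ≤ maxClusterDensity (H n).G ω} →
      ω' ∈ {ω | β ≤ maxClusterDensity (H n).G ω} :=
    fun n β ω ω' hle hω => le_trans hω (maxClusterDensity_mono _ hle)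
  have hkey : ∀ᶠ n in atTop, pclamp ((1 + ε₀/2) * p n) ≤ pclamp (q n) := by
    by_contra hcon
    rw [Filter.not_eventually] at hcon
    have hev : ∀ᶠ n in atTop, (N ≤ n ∧
        percProb (H n).G ((1 - ε₀/2) * p n)
          {ω | ε₀ ≤ maxClusterDensity (H n).G ω} < ε) :=
      (eventually_ge_atTop N).and ((hsub ε₀ hε₀).eventually (gt_mem_nhds hε))
    obtain ⟨n, hlt', hNn, hsmall⟩ := (hcon.and_eventually hev).exists
    have hlt : pclamp (q n) < pclamp ((1 + ε₀/2) * p n) := not_le.mp hlt'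
    have hq1 : q n < 1 := by
      by_contra hq1
      push_neg at hq1
      have h1 : pclamp (q n) = 1 := by
        rw [pclamp, min_eq_left hq1, max_eq_right zero_le_one]
      rw [h1] at hlt
      exact absurd (pclamp_le_one ((1 + ε₀/2) * p n)) (not_le.mpr hlt)
    have hsupn := hN n hNn hq1
    have hε1 : ε ≤ 1 := hsupn.trans (percProb_le_one _ _ _)
    have hqp : q n ≤ (1 + ε₀/2) * p n := by
      have h1 : q n ≤ pclamp (q n) := le_pclamp hq1.le
      have h2 : pclamp ((1 + ε₀/2) * p n) ≤ (1 + ε₀/2) * p n :=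
        pclamp_le_self (lt_of_le_of_lt (pclamp_nonneg _) hlt)
      linarith
    have hp0 : 0 ≤ p n := by
      have h2 : pclamp ((1 + ε₀/2) * p n) ≤ (1 + ε₀/2) * p n :=
        pclamp_le_self (lt_of_le_of_lt (pclamp_nonneg _) hlt)
      have h3 : 0 < (1 + ε₀/2) * p n :=
        lt_of_le_of_lt (pclamp_nonneg (q n)) (lt_of_lt_of_le hlt h2)
      nlinarith
    have c1 : percProb (H n).G ((1-ε)*q n) {ω | ε ≤ maxClusterDensity (H n).G ω}
        ≤ percProb (H n).G ((1-ε)*q n) {ω | ε₀ ≤ maxClusterDensity (H n).G ω} :=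
      percProb_mono_event _ _ (fun ω hω => le_trans hε₀le hω)
    have c2 : percProb (H n).G ((1-ε)*q n) {ω | ε₀ ≤ maxClusterDensity (H n).G ω}
        ≤ percProb (H n).G ((1-ε₀)*q n) {ω | ε₀ ≤ maxClusterDensity (H n).G ω} := by
      refine percProb_mono_p _ ?_ _ (hinc n ε₀)
      rcases le_or_gt 0 (q n) with hq0 | hq0
      · exact pclamp_mono (by nlinarith)
      · rw [pclamp_eq_zero (by nlinarith : (1-ε)*q n ≤ 0)]
        exact pclamp_nonneg _
    have c3 : percProb (H n).G ((1-ε₀)*q n) {ω | ε₀ ≤ maxClusterDensity (H n).G ω}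
        ≤ percProb (H n).G ((1-ε₀)*((1+ε₀/2)*p n))
            {ω | ε₀ ≤ maxClusterDensity (H n).G ω} := by
      refine percProb_mono_p _ ?_ _ (hinc n ε₀)
      exact pclamp_mono (mul_le_mul_of_nonneg_left hqp (by linarith))
    have c4 : percProb (H n).G ((1-ε₀)*((1+ε₀/2)*p n))
            {ω | ε₀ ≤ maxClusterDensity (H n).G ω}
        ≤ percProb (H n).G ((1-ε₀/2)*p n)
            {ω | ε₀ ≤ maxClusterDensity (H n).G ω} := by
      refine percProb_mono_p _ ?_ _ (hinc n ε₀)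
      refine pclamp_mono ?_
      nlinarith [mul_nonneg (mul_nonneg hε₀.le hε₀.le) hp0]
    linarith
  have hlow : ∀ᶠ n in atTop,
      percProb (H n).G ((1+ε₀/2)*p n) {ω | α ≤ maxClusterDensity (H n).G ω}
        ≤ percProb (H n).G (q n) {ω | α ≤ maxClusterDensity (H n).G ω} :=
    hkey.mono fun n h => percProb_mono_p _ h _ (hinc n α)
  have hhigh : ∀ᶠ n in atTop,
      percProb (H n).G (q n) {ω | α ≤ maxClusterDensity (H n).G ω} ≤ 1 :=
    Filter.Eventually.of_forall fun n => percProb_le_one _ _ _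
  exact tendsto_of_tendsto_of_tendsto_of_le_of_le' hsup tendsto_const_nhds hlow hhigh
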